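/- arXiv:1406.1957 — 2 statements merged into one kernel-verified Lean document; each statement's English description precedes it below -/
import Mathlib

section
/- Let Φ be a homogeneous Poisson point process on ℝ² with intensity λ > 0, let ℓ(r) = (Kr)^β with K > 0 and β > 2, and let {S_X} be i.i.d. positive random variables with E[S^(2/β)] < ∞, independent of Φ. Then the point process Θ = {ℓ(|X|)/S_X : X ∈ Φ} on (0,∞) is an inhomogeneous Poisson point process with intensity measure Λ([0,t)) = a·t^(2/β), where a = λπE[S^(2/β)]/K². -/
open Real MeasureTheory Set ENNReal

/-- `e^{−x}` for extended nonnegative `x`, with `e^{−∞} = 0`. -/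
noncomputable def expNeg (x : ℝ≥0∞) : ℝ≥0∞ :=
  if x = ⊤ then 0 else ENNReal.ofReal (Real.exp (-x.toReal))

/-- `N` is a Poisson point process on `E` with intensity measure `Λ`, characterized by
its Laplace functional `E[exp(−∫ f dN)] = exp(−∫ (1 − e^{−f}) dΛ)`. -/
def IsPoissonPP {Ω E : Type*} [MeasurableSpace Ω] [MeasurableSpace E]
    (P : Measure Ω) (N : Ω → Measure E) (Λ : Measure E) : Prop :=
  ∀ f : E → ℝ≥0∞, Measurable f →
    ∫⁻ ω, expNeg (∫⁻ y, f y ∂(N ω)) ∂P = expNeg (∫⁻ y, 1 - expNeg (f y) ∂Λ)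

lemma measurable_expNeg : Measurable expNeg := by
  refine Measurable.ite (measurableSet_singleton ⊤) measurable_const ?_
  exact ENNReal.measurable_ofReal.comp
    (Real.measurable_exp.comp (measurable_neg.comp ENNReal.measurable_toReal))

/-- for a homogeneous Poisson process of intensity `λ` on `ℝ²` with
i.i.d. positive marks `S` (encoded, via the marking theorem, as a Poisson process `N`
on `ℝ² × ℝ` with intensity `(λ·vol) ⊗ μS`), the propagation process
`Θ = {(K|X|)^β / S_X}` is a Poisson point process on `(0,∞)` whose intensity measure
satisfies `Λ_Θ([0,t)) = a t^{2/β}` with `a = λ π E[S^{2/β}] / K²`. -/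
theorem propagation_process_is_poisson
    {Ω : Type*} [MeasurableSpace Ω] (P : Measure Ω) [IsProbabilityMeasure P]
    (lam K β : ℝ) (hlam : 0 < lam) (hK : 0 < K) (hβ : 2 < β)
    (μS : Measure ℝ) [IsProbabilityMeasure μS] (hSpos : μS (Set.Iic 0) = 0)
    (hSmom : ∫⁻ s, ENNReal.ofReal (s ^ (2 / β)) ∂μS ≠ ⊤)
    (N : Ω → Measure (EuclideanSpace ℝ (Fin 2) × ℝ))
    (hN : IsPoissonPP P N
      ((ENNReal.ofReal lam • (volume : Measure (EuclideanSpace ℝ (Fin 2)))).prod μS)) :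
    ∃ ΛΘ : Measure ℝ,
      IsPoissonPP P (fun ω => (N ω).map fun p => (K * ‖p.1‖) ^ β / p.2) ΛΘ ∧
      ∀ t : ℝ, 0 ≤ t →
        ΛΘ (Set.Ico 0 t) =
          ENNReal.ofReal
            ((lam * π * (∫⁻ s, ENNReal.ofReal (s ^ (2 / β)) ∂μS).toReal / K ^ 2) *
              t ^ (2 / β)) := by
  have hβ0 : (0:ℝ) < β := by linarith
  set E2 := EuclideanSpace ℝ (Fin 2)
  set ν : Measure E2 := ENNReal.ofReal lam • volume with hν
  set μ : Measure (E2 × ℝ) := ν.prod μS with hμ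
  set T : E2 × ℝ → ℝ := fun p => (K * ‖p.1‖) ^ β / p.2 with hT
  have hTm : Measurable T :=
    ((measurable_const.mul measurable_fst.norm).pow measurable_const).div measurable_snd
  haveI : SigmaFinite ν := by
    have : ν = lam.toNNReal • (volume : Measure E2) := by
      ext s hs
      rw [hν]; rfl
    rw [this]; infer_instance
  refine ⟨μ.map T, ?_, ?_⟩
  · intro f hf
    have h1 : ∀ ω, ∫⁻ y, f y ∂((N ω).map T) = ∫⁻ p, f (T p) ∂(N ω) := fun ω =>
      lintegral_map hf hTm
    simp only [h1]
    rw [hN (fun p => f (T p)) (hf.comp hTm)]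
    congr 1
    exact (lintegral_map (f := fun y => 1 - expNeg (f y))
      (measurable_const.sub (measurable_expNeg.comp hf)) hTm).symm
  · intro t ht
    rcases ht.eq_or_lt with rfl | htpos
    · simp [Real.zero_rpow (by positivity : (2:ℝ)/β ≠ 0)]
    have hA : MeasurableSet (T ⁻¹' Set.Ico 0 t) := hTm measurableSet_Ico
    rw [Measure.map_apply hTm measurableSet_Ico]
    have hswap : μ (T ⁻¹' Set.Ico 0 t)
        = ∫⁻ s, ν (Prod.mk s ⁻¹' (Prod.swap ⁻¹' (T ⁻¹' Set.Ico 0 t))) ∂μS := by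
      rw [hμ, ← Measure.prod_swap, Measure.map_apply measurable_swap hA,
        Measure.prod_apply (measurable_swap hA)]
    rw [hswap]
    have hs_ae : ∀ᵐ s ∂μS, 0 < s := by
      rw [ae_iff]
      simp only [not_lt]; exact hSpos
    have hI : ∫⁻ s, ν (Prod.mk s ⁻¹' (Prod.swap ⁻¹' (T ⁻¹' Set.Ico 0 t))) ∂μS
        = ∫⁻ s, ENNReal.ofReal (lam * π * t ^ (2/β) / K ^ 2)
            * ENNReal.ofReal (s ^ (2/β)) ∂μS := by
      refine lintegral_congr_ae (hs_ae.mono fun s hs => ?_)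
      have hts : 0 < t * s := mul_pos htpos hs
      have hset : Prod.mk s ⁻¹' (Prod.swap ⁻¹' (T ⁻¹' Set.Ico 0 t))
          = Metric.ball (0 : E2) ((t * s) ^ β⁻¹ / K) := by
        ext x
        have hKx : 0 ≤ K * ‖x‖ := by positivity
        simp only [Set.mem_preimage, Set.mem_Ico, Prod.swap_prod_mk, hT,
          Metric.mem_ball, dist_zero_right]
        constructor
        · rintro ⟨-, h2⟩
          have h3 : (K * ‖x‖) ^ β < t * s := (div_lt_iff₀ hs).mp h2
          have h4 : K * ‖x‖ < (t * s) ^ β⁻¹ :=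
            (Real.lt_rpow_inv_iff_of_pos hKx hts.le hβ0).mpr h3
          rw [mul_comm] at h4
          exact (lt_div_iff₀ hK).mpr h4
        · intro h
          have h4 : K * ‖x‖ < (t * s) ^ β⁻¹ := by
            rw [mul_comm]; exact (lt_div_iff₀ hK).mp h
          exact ⟨by positivity, (div_lt_iff₀ hs).mpr
            ((Real.lt_rpow_inv_iff_of_pos hKx hts.le hβ0).mp h4)⟩
      dsimp only
      rw [hset]
      have hball : (volume : Measure E2) (Metric.ball 0 ((t * s) ^ β⁻¹ / K))
          = ENNReal.ofReal (π * (t ^ (2/β) * s ^ (2/β)) / K ^ 2) := by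
        rw [EuclideanSpace.volume_ball]
        have hcard : (Fintype.card (Fin 2)) = 2 := by simp
        rw [hcard]
        have hΓ : Real.Gamma ((2:ℕ) / 2 + 1) = 1 := by
          norm_num
        have hsq : Real.sqrt π ^ (2:ℕ) = π := Real.sq_sqrt Real.pi_nonneg
        rw [hΓ, hsq]
        have hr : (0:ℝ) ≤ (t * s) ^ β⁻¹ / K := by positivity
        rw [← ENNReal.ofReal_pow hr, ← ENNReal.ofReal_mul (by positivity)]
        congr 1
        have hpow : ((t * s) ^ β⁻¹) ^ (2:ℕ) = t ^ (2/β) * s ^ (2/β) := by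
          rw [← Real.rpow_natCast ((t*s) ^ β⁻¹) 2, ← Real.rpow_mul hts.le,
            show β⁻¹ * (2:ℕ) = 2/β by push_cast; ring,
            Real.mul_rpow htpos.le hs.le]
        rw [div_pow, hpow]
        ring
      rw [hν, Measure.smul_apply, hball, smul_eq_mul, ← ENNReal.ofReal_mul hlam.le,
        ← ENNReal.ofReal_mul (by positivity)]
      congr 1
      ring
    rw [hI, lintegral_const_mul _ (by
      exact ENNReal.measurable_ofReal.comp (measurable_id.pow measurable_const))]
    rw [show (lam * π * (∫⁻ s, ENNReal.ofReal (s ^ (2/β)) ∂μS).toReal / K ^ 2) * t ^ (2/β)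
        = (lam * π * t ^ (2/β) / K ^ 2) * (∫⁻ s, ENNReal.ofReal (s ^ (2/β)) ∂μS).toReal
        by ring,
      ENNReal.ofReal_mul (by positivity), ENNReal.ofReal_toReal hSmom]
end

section
/- Let 0 ≤ α < 1 and θ > −α, let U₁, U₂, … be independent random variables with Uᵢ ~ Beta(1−α, θ+iα), and define Ṽ₁ = U₁ and Ṽᵢ = (1−U₁)⋯(1−U_{i−1})Uᵢ for i ≥ 2. Then ∑_{i=1}^∞ Ṽᵢ = 1 almost surely. -/
open Real MeasureTheory Set ProbabilityTheory Finset Filter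
open scoped ENNReal NNReal Topology

noncomputable def betaMeasure' (a b : ℝ) : Measure ℝ :=
  (volume.restrict (Set.Ioo (0 : ℝ) 1)).withDensity fun x =>
    ENNReal.ofReal
      (Real.Gamma (a + b) / (Real.Gamma a * Real.Gamma b) * x ^ (a - 1) * (1 - x) ^ (b - 1))

lemma real_betaIntegral {a b : ℝ} (ha : 0 < a) (hb : 0 < b) :
    ∫ x in Set.Ioo (0:ℝ) 1, x ^ (a-1) * (1-x) ^ (b-1)
      = Real.Gamma a * Real.Gamma b / Real.Gamma (a+b) := by
  have h1 : ∫ x in Set.Ioo (0:ℝ) 1, x ^ (a-1) * (1-x) ^ (b-1)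
      = ∫ x in (0:ℝ)..1, x ^ (a-1) * (1-x) ^ (b-1) := by
    rw [intervalIntegral.integral_of_le zero_le_one, integral_Ioc_eq_integral_Ioo]
  have h2 : Complex.betaIntegral a b
      = ((∫ x in (0:ℝ)..1, x ^ (a-1) * (1-x) ^ (b-1) : ℝ) : ℂ) := by
    rw [Complex.betaIntegral, ← intervalIntegral.integral_ofReal]
    apply intervalIntegral.integral_congr
    intro x hx
    rw [Set.uIcc_of_le (zero_le_one : (0:ℝ) ≤ 1)] at hx
    have hx1 : (0:ℝ) ≤ 1 - x := by linarith [hx.2]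
    simp only [Complex.ofReal_mul]
    rw [Complex.ofReal_cpow hx.1, Complex.ofReal_cpow hx1]
    push_cast
    ring
  have h3 := Complex.Gamma_mul_Gamma_eq_betaIntegral
    (s := (a:ℂ)) (t := (b:ℂ)) (by simpa using ha) (by simpa using hb)
  rw [h2] at h3
  have h4 : ((Real.Gamma a * Real.Gamma b : ℝ) : ℂ)
      = ((Real.Gamma (a+b) * ∫ x in (0:ℝ)..1, x ^ (a-1) * (1-x) ^ (b-1) : ℝ) : ℂ) := by
    push_cast
    rw [← Complex.Gamma_ofReal, ← Complex.Gamma_ofReal, ← Complex.Gamma_ofReal]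
    push_cast at h3 ⊢
    exact h3
  have h5 := Complex.ofReal_inj.mp h4
  have hG : Real.Gamma (a+b) ≠ 0 := (Real.Gamma_pos_of_pos (by linarith)).ne'
  rw [h1]
  field_simp
  linarith [h5]

lemma betaMeasure_compl_eq_zero (a b : ℝ) :
    betaMeasure' a b (Set.Ioo (0:ℝ) 1)ᶜ = 0 := by
  rw [betaMeasure', withDensity_apply _ measurableSet_Ioo.compl,
    Measure.restrict_restrict measurableSet_Ioo.compl, compl_inter_self]
  simp

lemma betaMeasure_integral_one_sub {a b : ℝ} (ha : 0 < a) (hb : 0 < b) :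
    ∫ x, (1 - x) ∂(betaMeasure' a b) = b / (a + b) := by
  set C := Real.Gamma (a+b) / (Real.Gamma a * Real.Gamma b) with hC_def
  have hGa := Real.Gamma_pos_of_pos ha
  have hGb := Real.Gamma_pos_of_pos hb
  have hGab := Real.Gamma_pos_of_pos (show 0 < a + b by linarith)
  have hC : 0 < C := div_pos hGab (mul_pos hGa hGb)
  have hdm : Measurable fun x : ℝ => (C * x ^ (a-1) * (1-x) ^ (b-1)).toNNReal :=
    (((measurable_const.mul (measurable_id.pow measurable_const)).mul
      ((measurable_const.sub measurable_id).pow measurable_const))).real_toNNReal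
  have hrw : (fun x : ℝ => ENNReal.ofReal (C * x ^ (a-1) * (1-x) ^ (b-1)))
      = fun x : ℝ => ((C * x ^ (a-1) * (1-x) ^ (b-1)).toNNReal : ℝ≥0∞) := rfl
  rw [betaMeasure', ← hC_def, hrw, integral_withDensity_eq_integral_smul hdm]
  have hcongr : ∫ x in Set.Ioo (0:ℝ) 1, (C * x ^ (a-1) * (1-x) ^ (b-1)).toNNReal • (1 - x)
      = ∫ x in Set.Ioo (0:ℝ) 1, C * (x ^ (a-1) * (1-x) ^ ((b+1)-1)) := by
    apply setIntegral_congr_fun measurableSet_Ioo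
    intro x hx
    have hx0 : (0:ℝ) < x := hx.1
    have hx1 : (0:ℝ) < 1 - x := by linarith [hx.2]
    have hnn : 0 ≤ C * x ^ (a-1) * (1-x) ^ (b-1) :=
      mul_nonneg (mul_nonneg hC.le (Real.rpow_nonneg hx0.le _)) (Real.rpow_nonneg hx1.le _)
    simp only [NNReal.smul_def, Real.coe_toNNReal _ hnn, smul_eq_mul]
    have : (1-x) ^ ((b+1)-1) = (1-x) ^ (b-1) * (1-x) := by
      rw [show (b+1)-1 = (b-1)+1 by ring, Real.rpow_add_one hx1.ne']
    rw [this]; ring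
  rw [hcongr, integral_const_mul, real_betaIntegral ha (by linarith : (0:ℝ) < b + 1)]
  rw [Real.Gamma_add_one hb.ne', show a + (b+1) = (a+b)+1 by ring,
    Real.Gamma_add_one (show a + b ≠ 0 by positivity)]
  field_simp [hC_def]
  rw [hC_def, div_mul_eq_mul_div, div_mul_eq_mul_div, div_eq_iff (by positivity)]; ring

/-- stick-breaking weights of `PD(α,θ)` sum to one almost surely.
Here `U i` is the `(i+1)`-st stick-breaking variable, `U i ~ B(1−α, θ+(i+1)α)`,
and `Ṽ_{i+1} = (1−U 0)⋯(1−U (i−1)) · U i`. -/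
theorem stick_breaking_sums_to_one
    {Ω : Type*} [MeasurableSpace Ω] (P : Measure Ω) [IsProbabilityMeasure P]
    (α θ : ℝ) (hα0 : 0 ≤ α) (hα1 : α < 1) (hθ : -α < θ)
    (U : ℕ → Ω → ℝ) (hUm : ∀ i, Measurable (U i))
    (hIndep : iIndepFun U P)
    (hLaw : ∀ i : ℕ, Measure.map (U i) P = betaMeasure' (1 - α) (θ + ((i : ℝ) + 1) * α)) :
    ∀ᵐ ω ∂P, ∑' i : ℕ, (∏ j ∈ Finset.range i, (1 - U j ω)) * U i ω = 1 := by
  have ha : (0:ℝ) < 1 - α := by linarith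
  have hb : ∀ i : ℕ, (0:ℝ) < θ + ((i:ℝ)+1) * α := by
    intro i
    have h1 : 0 ≤ (i:ℝ) * α := mul_nonneg (Nat.cast_nonneg i) hα0
    nlinarith
  set g : ℕ → Ω → ℝ := fun j ω => 1 - U j ω with hg_def
  have hgm : ∀ j, Measurable (g j) := fun j => measurable_const.sub (hUm j)
  have hgIndep : iIndepFun g P :=
    hIndep.comp (fun _ => fun x : ℝ => 1 - x) (fun _ => measurable_const.sub measurable_id)
  set X : ℕ → Ω → ℝ := fun n => ∏ j ∈ Finset.range n, g j with hX_def
  have hXapp : ∀ n ω, X n ω = ∏ j ∈ Finset.range n, g j ω := by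
    intro n ω
    simp [hX_def]
  have hXm : ∀ n, Measurable (X n) := by
    intro n
    have h : Measurable fun ω => ∏ j ∈ Finset.range n, g j ω :=
      Finset.measurable_prod _ (fun j _ => hgm j)
    simpa [funext (hXapp n)] using h
  have hae : ∀ᵐ ω ∂P, ∀ i, U i ω ∈ Set.Ioo (0:ℝ) 1 := by
    rw [ae_all_iff]
    intro i
    rw [ae_iff]
    have h0 : P (U i ⁻¹' (Set.Ioo (0:ℝ) 1)ᶜ) = 0 := by
      have h := betaMeasure_compl_eq_zero (1-α) (θ + ((i:ℝ)+1)*α)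
      rw [← hLaw i, Measure.map_apply (hUm i) measurableSet_Ioo.compl] at h
      exact h
    exact h0
  have hgint : ∀ j, Integrable (g j) P := by
    intro j
    refine ⟨(hgm j).aestronglyMeasurable, HasFiniteIntegral.of_bounded (C := 1) ?_⟩
    filter_upwards [hae] with ω hU
    have h := hU j
    rw [Real.norm_eq_abs, abs_le]
    exact ⟨by simp only [hg_def]; linarith [h.2], by simp only [hg_def]; linarith [h.1]⟩
  have hXint : ∀ n, Integrable (X n) P := by
    intro n
    refine ⟨(hXm n).aestronglyMeasurable, HasFiniteIntegral.of_bounded (C := 1) ?_⟩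
    filter_upwards [hae] with ω hU
    rw [hXapp, Real.norm_eq_abs, abs_le]
    constructor
    · refine le_trans (by norm_num) (Finset.prod_nonneg fun j _ => ?_)
      have h := hU j; simp only [hg_def]; linarith [h.2]
    · refine Finset.prod_le_one (fun j _ => ?_) (fun j _ => ?_)
      · have h := hU j; simp only [hg_def]; linarith [h.2]
      · have h := hU j; simp only [hg_def]; linarith [h.1]
  set m : ℕ → ℝ := fun j => (θ + ((j:ℝ)+1)*α) / ((1-α) + (θ + ((j:ℝ)+1)*α)) with hm_def
  have hgval : ∀ j, ∫ ω, g j ω ∂P = m j := by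
    intro j
    have hsm : AEStronglyMeasurable (fun x : ℝ => 1 - x) (Measure.map (U j) P) :=
      (measurable_const.sub measurable_id).aestronglyMeasurable
    have h1 : ∫ x, (1 - x) ∂(Measure.map (U j) P) = ∫ ω, 1 - U j ω ∂P :=
      integral_map (hUm j).aemeasurable hsm
    simp only [hg_def]
    rw [← h1, hLaw j, betaMeasure_integral_one_sub ha (hb j)]
  have hXval : ∀ n, ∫ ω, X n ω ∂P = ∏ j ∈ Finset.range n, m j := by
    intro n
    induction n with
    | zero => simp [hXapp]
    | succ n ih =>
      have hInd : IndepFun (X n) (g n) P := hgIndep.indepFun_prod_range_succ hgm n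
      have hXsucc : X (n+1) = X n * g n := by
        simp only [hX_def]
        exact Finset.prod_range_succ g n
      have hmul := IndepFun.integral_mul_eq_mul_integral hInd (hXint n).1 (hgint n).1
      rw [hXsucc]
      show integral P (X n * g n) = _
      rw [hmul, Finset.prod_range_succ, ← ih, ← hgval n]
  have hθ1 : (0:ℝ) < θ + 1 + α := by linarith
  set c : ℝ := (1 - α) / (θ + 1 + α) with hc_def
  have hc : 0 < c := div_pos ha hθ1
  have hm01 : ∀ j, 0 ≤ m j ∧ m j ≤ Real.exp (-(c * (1/((j:ℝ)+1)))) := by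
    intro j
    have hbj := hb j
    have hden : (0:ℝ) < (1-α) + (θ + ((j:ℝ)+1)*α) := by linarith
    refine ⟨div_nonneg hbj.le hden.le, ?_⟩
    have hfrac : c * (1/((j:ℝ)+1)) ≤ (1-α) / ((1-α) + (θ + ((j:ℝ)+1)*α)) := by
      rw [hc_def, div_mul_div_comm, mul_one]
      apply div_le_div_of_nonneg_left ha.le hden
      nlinarith [Nat.cast_nonneg (α := ℝ) j]
    have hm_eq : m j = 1 - (1-α) / ((1-α) + (θ + ((j:ℝ)+1)*α)) := by
      rw [hm_def]
      field_simp
      ring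
    have h2 : m j ≤ 1 - c * (1/((j:ℝ)+1)) := by rw [hm_eq]; linarith
    have h3 := Real.add_one_le_exp (-(c * (1/((j:ℝ)+1))))
    linarith
  have hprod0 : Tendsto (fun n => ∏ j ∈ Finset.range n, m j) atTop (𝓝 0) := by
    have hH : Tendsto (fun n => ∑ j ∈ Finset.range n, (1/((j:ℝ)+1))) atTop atTop := by
      simpa using Real.tendsto_sum_range_one_div_nat_succ_atTop
    have hcH : Tendsto (fun n => c * ∑ j ∈ Finset.range n, (1/((j:ℝ)+1))) atTop atTop :=
      hH.const_mul_atTop hc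
    have hupper : Tendsto (fun n => Real.exp (-(c * ∑ j ∈ Finset.range n, (1/((j:ℝ)+1)))))
        atTop (𝓝 0) := Real.tendsto_exp_atBot.comp (tendsto_neg_atTop_atBot.comp hcH)
    apply squeeze_zero (fun n => Finset.prod_nonneg fun j _ => (hm01 j).1) _ hupper
    intro n
    calc ∏ j ∈ Finset.range n, m j
        ≤ ∏ j ∈ Finset.range n, Real.exp (-(c * (1/((j:ℝ)+1)))) :=
          Finset.prod_le_prod (fun j _ => (hm01 j).1) (fun j _ => (hm01 j).2)
      _ = Real.exp (∑ j ∈ Finset.range n, -(c * (1/((j:ℝ)+1)))) := (Real.exp_sum _ _).symm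
      _ = Real.exp (-(c * ∑ j ∈ Finset.range n, (1/((j:ℝ)+1)))) := by
          congr 1
          rw [Finset.mul_sum, ← Finset.sum_neg_distrib]
  set L : Ω → ℝ := fun ω => ⨅ n, X n ω with hL_def
  have hLm : Measurable L := Measurable.iInf hXm
  have haeprops : ∀ᵐ ω ∂P, (∀ n, 0 ≤ X n ω ∧ X n ω ≤ 1) ∧ Antitone (fun n => X n ω) := by
    filter_upwards [hae] with ω hU
    have h01 : ∀ j, 0 ≤ g j ω ∧ g j ω ≤ 1 := fun j =>
      ⟨by have h := hU j; simp only [hg_def]; linarith [h.2],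
       by have h := hU j; simp only [hg_def]; linarith [h.1]⟩
    constructor
    · intro n
      rw [hXapp]
      exact ⟨Finset.prod_nonneg fun j _ => (h01 j).1,
        Finset.prod_le_one (fun j _ => (h01 j).1) (fun j _ => (h01 j).2)⟩
    · apply antitone_nat_of_succ_le
      intro n
      rw [hXapp, hXapp, Finset.prod_range_succ]
      exact mul_le_of_le_one_right (Finset.prod_nonneg fun j _ => (h01 j).1) (h01 n).2
  have haeL : ∀ᵐ ω ∂P, 0 ≤ L ω ∧ (∀ n, L ω ≤ X n ω)
      ∧ Tendsto (fun n => X n ω) atTop (𝓝 (L ω)) := by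
    filter_upwards [haeprops] with ω hw
    obtain ⟨h01, hanti⟩ := hw
    have hbdd : BddBelow (Set.range fun n => X n ω) := by
      refine ⟨0, ?_⟩
      rintro y ⟨n, rfl⟩
      exact (h01 n).1
    exact ⟨le_ciInf fun n => (h01 n).1, fun n => ciInf_le hbdd n,
      tendsto_atTop_ciInf hanti hbdd⟩
  have hLint : Integrable L P := by
    refine ⟨hLm.aestronglyMeasurable, HasFiniteIntegral.of_bounded (C := 1) ?_⟩
    filter_upwards [haeprops, haeL] with ω hp hL
    rw [Real.norm_eq_abs, abs_le]
    exact ⟨by linarith [hL.1], le_trans (hL.2.1 0) (hp.1 0).2⟩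
  have hIL0 : ∫ ω, L ω ∂P = 0 := by
    have hle : ∀ n, ∫ ω, L ω ∂P ≤ ∏ j ∈ Finset.range n, m j := by
      intro n
      rw [← hXval n]
      apply integral_mono_ae hLint (hXint n)
      filter_upwards [haeL] with ω hL using hL.2.1 n
    have h1 : ∫ ω, L ω ∂P ≤ 0 := ge_of_tendsto' hprod0 hle
    have h2 : 0 ≤ ∫ ω, L ω ∂P :=
      integral_nonneg_of_ae (by filter_upwards [haeL] with ω hL using hL.1)
    linarith
  have hLzero : ∀ᵐ ω ∂P, L ω = 0 := by
    have h := (integral_eq_zero_iff_of_nonneg_ae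
      (by filter_upwards [haeL] with ω hL using hL.1) hLint).mp hIL0
    filter_upwards [h] with ω hω using hω
  filter_upwards [hae, haeprops, haeL, hLzero] with ω hU hp hL hL0
  have hX0 : Tendsto (fun n => X n ω) atTop (𝓝 0) := hL0 ▸ hL.2.2
  have hterm : ∀ i, (∏ j ∈ Finset.range i, (1 - U j ω)) * U i ω = X i ω - X (i+1) ω := by
    intro i
    rw [hXapp, hXapp, Finset.prod_range_succ]
    simp only [hg_def]
    ring
  have hnn : ∀ i, 0 ≤ (∏ j ∈ Finset.range i, (1 - U j ω)) * U i ω := by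
    intro i
    refine mul_nonneg (Finset.prod_nonneg fun j _ => ?_) (hU i).1.le
    linarith [(hU j).2]
  have hpartial : ∀ n, ∑ i ∈ Finset.range n,
      (∏ j ∈ Finset.range i, (1 - U j ω)) * U i ω = 1 - X n ω := by
    intro n
    calc ∑ i ∈ Finset.range n, (∏ j ∈ Finset.range i, (1 - U j ω)) * U i ω
        = ∑ i ∈ Finset.range n, (X i ω - X (i+1) ω) :=
          Finset.sum_congr rfl fun i _ => hterm i
      _ = X 0 ω - X n ω := Finset.sum_range_sub' (fun i => X i ω) n
      _ = 1 - X n ω := by simp [hXapp]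
  have htend : Tendsto (fun n => ∑ i ∈ Finset.range n,
      (∏ j ∈ Finset.range i, (1 - U j ω)) * U i ω) atTop (𝓝 1) := by
    simp only [hpartial]
    simpa using (tendsto_const_nhds (x := (1:ℝ))).sub hX0
  exact ((hasSum_iff_tendsto_nat_of_nonneg hnn 1).mpr htend).tsum_eq
end
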